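/- For a symmetric positive definite matrix A ∈ ℝ^{n×n}, the spectral radius of the Gauss–Seidel iteration matrix (D - E)^{-1} E^T is strictly less than 1, so Gauss–Seidel converges for any initial approximation. -/

import Mathlib

open Matrix Filter Finset
open scoped Matrix.Norms.L2Operator Topology ENNReal NNReal

section GSAux

variable {n : ℕ}

private lemma gs_conj_quad (N : Matrix (Fin n) (Fin n) ℂ) (v : Fin n → ℂ) :
    (starRingEnd ℂ) (star v ⬝ᵥ N *ᵥ v) = star v ⬝ᵥ Nᴴ *ᵥ v := by
  have h : star (star v ⬝ᵥ N *ᵥ v) = star v ⬝ᵥ Nᴴ *ᵥ v := by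
    rw [← star_dotProduct_star (N *ᵥ v) (star v), star_star, star_mulVec, dotProduct_mulVec]
  exact h

private lemma gs_re_quad (M : Matrix (Fin n) (Fin n) ℝ) (v : Fin n → ℂ) :
    (star v ⬝ᵥ (M.map Complex.ofReal) *ᵥ v).re
      = (fun i => (v i).re) ⬝ᵥ M *ᵥ (fun i => (v i).re)
        + (fun i => (v i).im) ⬝ᵥ M *ᵥ (fun i => (v i).im) := by
  simp only [dotProduct, mulVec, map_apply, Finset.mul_sum, Pi.star_apply]
  rw [Complex.re_sum, ← Finset.sum_add_distrib]
  refine Finset.sum_congr rfl fun i _ => ?_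
  rw [Complex.re_sum, ← Finset.sum_add_distrib]
  refine Finset.sum_congr rfl fun j _ => ?_
  simp [Complex.mul_re, RCLike.star_def]

private lemma gs_re_quad_pos (M : Matrix (Fin n) (Fin n) ℝ) (hM : M.PosDef) (v : Fin n → ℂ)
    (hv : v ≠ 0) : 0 < (star v ⬝ᵥ (M.map Complex.ofReal) *ᵥ v).re := by
  rw [gs_re_quad]
  set x := fun i => (v i).re with hxdef
  set y := fun i => (v i).im with hydef
  have hxy : x ≠ 0 ∨ y ≠ 0 := by
    by_contra h
    push_neg at h
    apply hv
    funext i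
    have h1 : x i = 0 := by rw [h.1]; rfl
    have h2 : y i = 0 := by rw [h.2]; rfl
    exact Complex.ext h1 h2
  rcases hxy with hx | hy
  · have h1 := hM.dotProduct_mulVec_pos hx
    have h2 := hM.posSemidef.dotProduct_mulVec_nonneg y
    simp only [star_trivial] at h1 h2
    linarith
  · have h1 := hM.posSemidef.dotProduct_mulVec_nonneg x
    have h2 := hM.dotProduct_mulVec_pos hy
    simp only [star_trivial] at h1 h2
    linarith

private lemma gs_map_ofReal_sub (P Q : Matrix (Fin n) (Fin n) ℝ) :
    (P - Q).map Complex.ofReal = P.map Complex.ofReal - Q.map Complex.ofReal := by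
  ext i j; simp

private lemma gs_mul_map_inv_mul (L N : Matrix (Fin n) (Fin n) ℝ) (hL : IsUnit L.det) :
    (L.map Complex.ofReal) * ((L⁻¹ * N).map Complex.ofReal) = N.map Complex.ofReal := by
  have h1 : ∀ (P Q : Matrix (Fin n) (Fin n) ℝ),
      (P * Q).map Complex.ofReal = P.map Complex.ofReal * Q.map Complex.ofReal := by
    intro P Q; exact Matrix.map_mul (f := Complex.ofRealHom)
  rw [h1, ← Matrix.mul_assoc, ← h1, Matrix.mul_nonsing_inv _ hL]
  simp

private lemma gs_conjTranspose_map_ofReal (M : Matrix (Fin n) (Fin n) ℝ) :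
    (M.map Complex.ofReal)ᴴ = Mᵀ.map Complex.ofReal := by
  ext i j; simp

/-- Core eigenvalue estimate for the Gauss–Seidel iteration matrix. -/
private lemma gs_eig_lt (A D E : Matrix (Fin n) (Fin n) ℝ) (hA : A.PosDef)
    (hAeq : D - E - Eᵀ = A) (hDsym : Dᵀ = D) (hDpos : D.PosDef)
    (hL : IsUnit (D - E).det)
    (μ : ℂ) (v : Fin n → ℂ) (hv : v ≠ 0)
    (hev : (((D - E)⁻¹ * Eᵀ).map Complex.ofReal) *ᵥ v = μ • v) : ‖μ‖ < 1 := by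
  have heq : (Eᵀ.map Complex.ofReal) *ᵥ v = μ • (((D - E).map Complex.ofReal) *ᵥ v) := by
    rw [← gs_mul_map_inv_mul (D - E) Eᵀ hL, ← Matrix.mulVec_mulVec, hev, Matrix.mulVec_smul]
  set Dc := D.map Complex.ofReal
  set Ec := E.map Complex.ofReal
  set Etc := Eᵀ.map Complex.ofReal
  set Lc := (D - E).map Complex.ofReal with hLc
  set d := star v ⬝ᵥ Dc *ᵥ v with hd
  set z := star v ⬝ᵥ Ec *ᵥ v with hzdef
  have hzc : star v ⬝ᵥ Etc *ᵥ v = (starRingEnd ℂ) z := by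
    rw [hzdef, gs_conj_quad, gs_conjTranspose_map_ofReal]
  have hLcv : star v ⬝ᵥ Lc *ᵥ v = d - z := by
    rw [hLc, gs_map_ofReal_sub, Matrix.sub_mulVec, dotProduct_sub]
  have hz : (starRingEnd ℂ) z = μ * (d - z) := by
    rw [← hzc, heq, dotProduct_smul, hLcv]; rfl
  have hdim : d.im = 0 := by
    have := gs_conj_quad (N := Dc) v
    rw [gs_conjTranspose_map_ofReal, hDsym] at this
    exact Complex.conj_eq_iff_im.mp this
  have hdre : 0 < d.re := gs_re_quad_pos D hDpos v hv
  have hare : 0 < (star v ⬝ᵥ (A.map Complex.ofReal) *ᵥ v).re := gs_re_quad_pos A hA v hv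
  have hAc : star v ⬝ᵥ (A.map Complex.ofReal) *ᵥ v = d - z - (starRingEnd ℂ) z := by
    rw [← hAeq, gs_map_ofReal_sub, gs_map_ofReal_sub, Matrix.sub_mulVec, Matrix.sub_mulVec,
      dotProduct_sub, dotProduct_sub, hzc]
  have hre2 : 0 < d.re - 2 * z.re := by
    rw [hAc] at hare
    simp only [Complex.sub_re, Complex.conj_re] at hare
    linarith
  have habs2 : (‖z‖) ^ 2 < (‖d - z‖) ^ 2 := by
    simp only [Complex.sq_norm, Complex.normSq_apply, Complex.sub_re, Complex.sub_im, hdim]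
    nlinarith [hdre, hre2]
  have hw : 0 < ‖d - z‖ := by
    rcases (norm_nonneg (d - z)).eq_or_lt with h | h
    · rw [← h] at habs2
      nlinarith [sq_nonneg (‖z‖)]
    · exact h
  have hmul : ‖μ‖ * ‖d - z‖ = ‖z‖ := by
    calc ‖μ‖ * ‖d - z‖ = ‖μ * (d - z)‖ :=
          (norm_mul μ (d - z)).symm
      _ = ‖(starRingEnd ℂ) z‖ := by rw [hz]
      _ = ‖z‖ := Complex.norm_conj z
  have habslt : ‖z‖ < ‖d - z‖ := by
    nlinarith [norm_nonneg z, norm_nonneg (d - z)]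
  calc ‖μ‖ = ‖z‖ / ‖d - z‖ :=
        eq_div_of_mul_eq hw.ne' hmul
    _ < 1 := (div_lt_one hw).mpr habslt

private lemma gs_spec_bound (M : Matrix (Fin n) (Fin n) ℂ)
    (h : ∀ (μ : ℂ) (v : Fin n → ℂ), v ≠ 0 → M *ᵥ v = μ • v → ‖μ‖ < 1) :
    ∀ μ ∈ spectrum ℂ M, (‖μ‖₊ : ℝ≥0∞) < 1 := by
  intro μ hμ
  rw [spectrum.mem_iff] at hμ
  rw [Matrix.isUnit_iff_isUnit_det, isUnit_iff_ne_zero, not_not,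
    ← Matrix.exists_mulVec_eq_zero_iff] at hμ
  obtain ⟨v, hv, hveq⟩ := hμ
  have hMv : M *ᵥ v = μ • v := by
    rw [Algebra.algebraMap_eq_smul_one, Matrix.sub_mulVec, sub_eq_zero] at hveq
    rw [← hveq, Matrix.smul_mulVec, Matrix.one_mulVec]
  have := h μ v hv hMv
  have h1 : ‖μ‖₊ < 1 := by
    rw [← NNReal.coe_lt_coe]
    simpa using this
  exact_mod_cast h1

private lemma gs_spectralRadius_lt_one (M : Matrix (Fin n) (Fin n) ℂ)
    (h : ∀ μ ∈ spectrum ℂ M, (‖μ‖₊ : ℝ≥0∞) < 1) :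
    spectralRadius ℂ M < 1 := by
  have himg : spectralRadius ℂ M = sSup ((fun μ : ℂ => (‖μ‖₊ : ℝ≥0∞)) '' spectrum ℂ M) := by
    rw [sSup_image]; rfl
  rcases (spectrum ℂ M).eq_empty_or_nonempty with hS | hS
  · rw [himg, hS]
    simp
  · have hfin : ((fun μ : ℂ => (‖μ‖₊ : ℝ≥0∞)) '' spectrum ℂ M).Finite :=
      (M.finite_spectrum).image _
    have hne : ((fun μ : ℂ => (‖μ‖₊ : ℝ≥0∞)) '' spectrum ℂ M).Nonempty := hS.image _
    obtain ⟨μ0, hμ0, hsup⟩ := hne.csSup_mem hfin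
    rw [himg, ← hsup]
    exact h μ0 hμ0

private lemma gs_norm_pow_tendsto_zero (M : Matrix (Fin n) (Fin n) ℂ)
    (h : spectralRadius ℂ M < 1) :
    Tendsto (fun k : ℕ => ‖M ^ k‖) atTop (𝓝 0) := by
  obtain ⟨c, hc1, hc2⟩ := exists_between h
  have hctop : c ≠ ⊤ := (hc2.trans_le le_top).ne
  set c' : ℝ≥0 := c.toNNReal with hc'
  have hcc : c = (c' : ℝ≥0∞) := (ENNReal.coe_toNNReal hctop).symm
  have hc'1 : c' < 1 := by
    rw [hcc] at hc2; exact_mod_cast hc2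
  have hg := spectrum.pow_nnnorm_pow_one_div_tendsto_nhds_spectralRadius M
  have hev : ∀ᶠ k : ℕ in atTop, ((‖M ^ k‖₊ : ℝ≥0∞)) ^ (1 / (k : ℝ)) < c :=
    hg.eventually_lt_const hc1
  have hbd : ∀ᶠ k : ℕ in atTop, ‖M ^ k‖ ≤ (c' : ℝ) ^ k := by
    filter_upwards [hev, eventually_ge_atTop 1] with k hk hk1
    have hk0 : (k : ℝ) ≠ 0 := by positivity
    have : (‖M ^ k‖₊ : ℝ≥0∞) ≤ c ^ k := by
      calc (‖M ^ k‖₊ : ℝ≥0∞) = (((‖M ^ k‖₊ : ℝ≥0∞)) ^ (1 / (k : ℝ))) ^ (k : ℕ) := by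
            rw [← ENNReal.rpow_natCast _ k, ← ENNReal.rpow_mul, one_div,
              inv_mul_cancel₀ hk0, ENNReal.rpow_one]
        _ ≤ c ^ k := pow_le_pow_left' hk.le k
    rw [hcc, ← ENNReal.coe_pow, ENNReal.coe_le_coe] at this
    calc ‖M ^ k‖ = ((‖M ^ k‖₊ : ℝ≥0) : ℝ) := rfl
      _ ≤ ((c' ^ k : ℝ≥0) : ℝ) := by exact_mod_cast this
      _ = (c' : ℝ) ^ k := by push_cast; ring
  refine squeeze_zero' (Eventually.of_forall fun k => norm_nonneg _) hbd ?_
  exact tendsto_pow_atTop_nhds_zero_of_lt_one c'.coe_nonneg (by exact_mod_cast hc'1)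

private lemma gs_coord_le_norm (y : EuclideanSpace ℂ (Fin n)) (i : Fin n) : ‖y i‖ ≤ ‖y‖ := by
  rw [EuclideanSpace.norm_eq, show ‖y i‖ = Real.sqrt (‖y i‖ ^ 2) from
    (Real.sqrt_sq (norm_nonneg _)).symm]
  exact Real.sqrt_le_sqrt (Finset.single_le_sum (fun j _ => sq_nonneg ‖y j‖) (mem_univ i))

private lemma gs_map_pow_ofReal (G : Matrix (Fin n) (Fin n) ℝ) (k : ℕ) :
    (G ^ k).map Complex.ofReal = (G.map Complex.ofReal) ^ k := by
  have := map_pow (Complex.ofRealHom.mapMatrix) G k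
  exact this

private lemma gs_mulVec_map_ofReal (P : Matrix (Fin n) (Fin n) ℝ) (w : Fin n → ℝ) :
    (P.map Complex.ofReal) *ᵥ (fun j => (w j : ℂ)) = fun i => ((P *ᵥ w) i : ℂ) := by
  funext i
  simp [mulVec, dotProduct]

private lemma gs_abs_mulVec_le (P : Matrix (Fin n) (Fin n) ℝ) (w : Fin n → ℝ) (i : Fin n) :
    |(P *ᵥ w) i| ≤ ‖P.map Complex.ofReal‖ *
      ‖((EuclideanSpace.equiv (Fin n) ℂ).symm (fun j => (w j : ℂ)))‖ := by
  have h1 := Matrix.l2_opNorm_mulVec (P.map Complex.ofReal)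
    ((EuclideanSpace.equiv (Fin n) ℂ).symm (fun j => (w j : ℂ)))
  refine le_trans ?_ h1
  have h2 := gs_coord_le_norm ((EuclideanSpace.equiv (Fin n) ℂ).symm
    ((P.map Complex.ofReal) *ᵥ (fun j => (w j : ℂ)))) i
  have h3 : ((EuclideanSpace.equiv (Fin n) ℂ).symm
      ((P.map Complex.ofReal) *ᵥ (fun j => (w j : ℂ)))) i = ((P *ᵥ w) i : ℂ) := by
    rw [gs_mulVec_map_ofReal]; rfl
  rw [h3] at h2
  simpa using h2

/-- The powers of a real matrix all of whose complex eigenvalues lie in the open unit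
disc kill any vector in the limit. -/
private lemma gs_pow_mulVec_tendsto (G : Matrix (Fin n) (Fin n) ℝ)
    (h : ∀ (μ : ℂ) (v : Fin n → ℂ), v ≠ 0 →
      (G.map Complex.ofReal) *ᵥ v = μ • v → ‖μ‖ < 1)
    (w : Fin n → ℝ) :
    Tendsto (fun k : ℕ => (G ^ k) *ᵥ w) atTop (𝓝 0) := by
  have hsr : spectralRadius ℂ (G.map Complex.ofReal) < 1 :=
    gs_spectralRadius_lt_one _ (gs_spec_bound _ h)
  have hnorm := gs_norm_pow_tendsto_zero _ hsr
  rw [tendsto_pi_nhds]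
  intro i
  simp only [Pi.zero_apply]
  set C := ‖((EuclideanSpace.equiv (Fin n) ℂ).symm (fun j => (w j : ℂ)))‖ with hC
  have hb : ∀ k : ℕ, ‖(G ^ k *ᵥ w) i‖ ≤ ‖(G.map Complex.ofReal) ^ k‖ * C := by
    intro k
    have := gs_abs_mulVec_le (G ^ k) w i
    rw [gs_map_pow_ofReal] at this
    simpa [Real.norm_eq_abs, hC] using this
  have hlim : Tendsto (fun k : ℕ => ‖(G.map Complex.ofReal) ^ k‖ * C) atTop (𝓝 0) := by
    have := hnorm.mul_const C
    simpa using this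
  exact squeeze_zero_norm hb hlim

end GSAux

open Matrix Finset in
/-- For a symmetric positive definite matrix A = D - E - Eᵀ, every eigenvalue
of the Gauss–Seidel iteration matrix (D - E)⁻¹ Eᵀ has modulus < 1 (spectral
radius < 1), so Gauss–Seidel converges from any initial approximation. -/
theorem gaussSeidel_converges_of_posDef (n : ℕ)
    (A : Matrix (Fin n) (Fin n) ℝ) (hA : A.PosDef)
    (D E : Matrix (Fin n) (Fin n) ℝ)
    (hD : D = Matrix.diagonal (fun i => A i i))
    (hE : ∀ i j, E i j = if j < i then - A i j else 0)
    (G : Matrix (Fin n) (Fin n) ℝ)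
    (hG : G = (D - E)⁻¹ * Eᵀ) :
    (∀ (μ : ℂ) (v : Fin n → ℂ), v ≠ 0 →
        (G.map (Complex.ofReal)).mulVec v = μ • v → ‖μ‖ < 1) ∧
    ∀ (b : Fin n → ℝ) (x : ℕ → (Fin n → ℝ)),
      (∀ k, x (k + 1) = (D - E)⁻¹.mulVec (Eᵀ.mulVec (x k) + b)) →
      Filter.Tendsto x Filter.atTop (nhds (A⁻¹.mulVec b)) := by
  -- basic structural facts
  have hAii : ∀ i, 0 < A i i := fun i => by
    have := hA.dotProduct_mulVec_pos (x := Pi.single i 1) (fun hcon => (by simpa using congrFun hcon i : False))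
    simpa [dotProduct, mulVec, Pi.single_apply] using this
  have hsym : ∀ i j, A j i = A i j := fun i j => by
    have := congrFun (congrFun hA.1 i) j
    simpa [conjTranspose_apply] using this
  have htri : (D - E).BlockTriangular OrderDual.toDual := by
    intro i j hij
    have hij' : i < j := hij
    simp [hD, hE, Matrix.diagonal_apply, hij'.ne, not_lt.mpr hij'.le]
  have hLdet : IsUnit (D - E).det := by
    rw [Matrix.det_of_lowerTriangular _ htri, isUnit_iff_ne_zero]
    refine (Finset.prod_pos (fun i _ => ?_)).ne'
    simpa [hD, hE] using hAii i
  have hAeq : D - E - Eᵀ = A := by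
    ext i j
    rcases lt_trichotomy i j with h | h | h
    · simp [hD, hE, transpose_apply, Matrix.diagonal_apply, h.ne, not_lt.mpr h.le, h, hsym i j]
    · simp [hD, hE, h]
    · simp [hD, hE, transpose_apply, Matrix.diagonal_apply, h.ne', h, not_lt.mpr h.le]
  have hDsym : Dᵀ = D := by simp [hD]
  have hDpos : D.PosDef := by
    rw [hD]; exact Matrix.posDef_diagonal_iff.mpr hAii
  have hAdet : IsUnit A.det := isUnit_iff_ne_zero.mpr hA.det_pos.ne'
  -- part 1
  have part1 : ∀ (μ : ℂ) (v : Fin n → ℂ), v ≠ 0 →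
      (G.map (Complex.ofReal)).mulVec v = μ • v → ‖μ‖ < 1 := by
    intro μ v hv hev
    exact gs_eig_lt A D E hA hAeq hDsym hDpos hLdet μ v hv (by rwa [← hG])
  refine ⟨part1, ?_⟩
  intro b x hrec
  set xs := A⁻¹ *ᵥ b with hxs
  have hAxs : A *ᵥ xs = b := by
    rw [hxs, Matrix.mulVec_mulVec, Matrix.mul_nonsing_inv _ hAdet, Matrix.one_mulVec]
  have hfix : xs = (D - E)⁻¹ *ᵥ (Eᵀ *ᵥ xs + b) := by
    have h1 : (D - E) *ᵥ xs = Eᵀ *ᵥ xs + b := by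
      have : (D - E) *ᵥ xs - Eᵀ *ᵥ xs = b := by
        rw [← Matrix.sub_mulVec, hAeq, hAxs]
      rw [← this]; abel
    rw [← h1, Matrix.mulVec_mulVec, Matrix.nonsing_inv_mul _ hLdet, Matrix.one_mulVec]
  have herr : ∀ k, x k - xs = (G ^ k) *ᵥ (x 0 - xs) := by
    intro k
    induction k with
    | zero => simp
    | succ k ih =>
      have h2 : (D - E)⁻¹ *ᵥ (Eᵀ *ᵥ xs + b) = xs := hfix.symm
      have : x (k + 1) - xs = G *ᵥ (x k - xs) := by
        calc x (k + 1) - xs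
            = (D - E)⁻¹ *ᵥ (Eᵀ *ᵥ x k + b) - (D - E)⁻¹ *ᵥ (Eᵀ *ᵥ xs + b) := by
              rw [hrec k, h2]
          _ = (D - E)⁻¹ *ᵥ ((Eᵀ *ᵥ x k + b) - (Eᵀ *ᵥ xs + b)) := by
              rw [Matrix.mulVec_sub]
          _ = (D - E)⁻¹ *ᵥ (Eᵀ *ᵥ (x k - xs)) := by
              have h3 : (Eᵀ *ᵥ x k + b) - (Eᵀ *ᵥ xs + b) = Eᵀ *ᵥ (x k - xs) := by
                rw [Matrix.mulVec_sub]
                abel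
              rw [h3]
          _ = G *ᵥ (x k - xs) := by rw [hG, ← Matrix.mulVec_mulVec]
      rw [this, ih, Matrix.mulVec_mulVec, ← pow_succ']
  have hpow := gs_pow_mulVec_tendsto G part1 (x 0 - xs)
  have hx : ∀ k, x k = xs + (G ^ k) *ᵥ (x 0 - xs) := by
    intro k
    rw [← herr k]; abel
  have : Tendsto (fun k => xs + (G ^ k) *ᵥ (x 0 - xs)) atTop (𝓝 (xs + 0)) :=
    tendsto_const_nhds.add hpow
  rw [add_zero] at this
  exact (funext hx : x = _) ▸ this
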